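/- Let 0 < τ ≤ t, and let (X_k)_{k≥1} and (Y_k)_{k≥1} be ℕ-valued random variables, all mutually independent, with X_k Poisson-distributed with parameter p_k τ and Y_k Poisson-distributed with parameter p_k (t − τ). Set M_τ = Σ_{k≥1} τ p_k · 1{X_k = 0}, M_t = Σ_{k≥1} t p_k · 1{X_k + Y_k = 0}, U_τ = Σ_{k≥1} 1{X_k is odd}, U_t = Σ_{k≥1} 1{X_k + Y_k is odd} (all series converge a.s. and define square-integrable random variables). Then Cov(M_τ, U_t) = (1/2) Σ_{k≥1} τ p_k ( e^{−p_k (2t + τ)} − e^{−p_k (2t − τ)} ) and Cov(M_t, U_τ) = (1/2) Σ_{k≥1} t p_k ( e^{−p_k (2τ + t)} − e^{−p_k t} ). -/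

import Mathlib

open Filter Topology Real MeasureTheory ProbabilityTheory

open scoped ENNReal NNReal


/-- A nonnegative real series equals the `toReal` of the corresponding `ℝ≥0∞` series. -/
lemma tsum_nonneg_eq_toReal (f : ℕ → ℝ) (hf : ∀ n, 0 ≤ f n) :
    ∑' n, f n = (∑' n, ENNReal.ofReal (f n)).toReal := by
  by_cases h : Summable f
  · rw [← ENNReal.ofReal_tsum_of_nonneg hf h, ENNReal.toReal_ofReal (tsum_nonneg hf)]
  · rw [tsum_eq_zero_of_not_summable h]
    by_cases h2 : ∑' n, ENNReal.ofReal (f n) = ⊤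
    · rw [h2]; simp
    · exfalso
      apply h
      have := ENNReal.summable_toReal h2
      refine this.congr fun n => ?_
      rw [ENNReal.toReal_ofReal (hf n)]

/-- Measurability (w.r.t. an arbitrary σ-algebra) of a `tsum` of nonnegative functions. -/
lemma measurable_tsum_nonneg {Ω : Type*} {m : MeasurableSpace Ω} (f : ℕ → Ω → ℝ)
    (hmeas : ∀ k, Measurable[m] (f k)) (hpos : ∀ k ω, 0 ≤ f k ω) :
    Measurable[m] (fun ω => ∑' k, f k ω) := by
  have : (fun ω => ∑' k, f k ω)
      = fun ω => (∑' k, ENNReal.ofReal (f k ω)).toReal := by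
    funext ω; exact tsum_nonneg_eq_toReal _ fun n => hpos n ω
  rw [this]
  exact (Measurable.ennreal_tsum fun k => (hmeas k).ennreal_ofReal).ennreal_toReal

lemma indep_mono {Ω : Type*} {mΩ : MeasurableSpace Ω} {P : Measure Ω}
    {m1 m2 m1' m2' : MeasurableSpace Ω}
    (h : Indep m1 m2 P) (h1 : m1' ≤ m1) (h2 : m2' ≤ m2) : Indep m1' m2' P := by
  rw [Indep_iff] at h ⊢
  exact fun t1 t2 ht1 ht2 => h t1 t2 (h1 _ ht1) (h2 _ ht2)

/-- Probability that a Poisson variable is odd. -/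
lemma poisson_odd {Ω : Type*} [MeasurableSpace Ω] (P : Measure Ω) [IsProbabilityMeasure P]
    (X : Ω → ℕ) (hXm : Measurable X) (r : ℝ)
    (h : ∀ j : ℕ, (P {ω | X ω = j}).toReal = Real.exp (-r) * r ^ j / j.factorial) :
    (P {ω | Odd (X ω)}).toReal = (1 - Real.exp (-(2 * r))) / 2 := by
  have hset : {ω | Odd (X ω)} = ⋃ n : ℕ, {ω | X ω = 2 * n + 1} := by
    ext ω
    simp only [Set.mem_setOf_eq, Set.mem_iUnion, Odd]
  have hmeas : ∀ n : ℕ, MeasurableSet {ω | X ω = 2 * n + 1} := fun n =>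
    hXm (MeasurableSet.of_discrete (s := {2 * n + 1}))
  have hdisj : Pairwise (Function.onFun Disjoint fun n : ℕ => {ω | X ω = 2 * n + 1}) := by
    intro i j hij
    refine Set.disjoint_left.mpr fun ω hi hj => ?_
    simp only [Set.mem_setOf_eq] at hi hj
    omega
  rw [hset, measure_iUnion hdisj hmeas, ENNReal.tsum_toReal_eq (fun n => measure_ne_top _ _)]
  have : ∀ n : ℕ, (P {ω | X ω = 2 * n + 1}).toReal
      = Real.exp (-r) * (r ^ (2 * n + 1) / (2 * n + 1).factorial) := by
    intro n; rw [h (2 * n + 1)]; ring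
  rw [tsum_congr this, tsum_mul_left]
  have hsinh : ∑' n : ℕ, r ^ (2 * n + 1) / ((2 * n + 1).factorial : ℝ) = Real.sinh r :=
    (Real.sinh_eq_tsum r).symm
  rw [hsinh, Real.sinh_eq]
  have h1 : Real.exp (-r) * Real.exp r = 1 := by rw [← Real.exp_add]; simp
  have h2 : Real.exp (-r) * Real.exp (-r) = Real.exp (-(2 * r)) := by
    rw [← Real.exp_add]; ring_nf
  field_simp
  have h2' : Real.exp (-(r * 2)) = Real.exp (-(2 * r)) := by ring_nf
  nlinarith [h1, h2, h2']

/-- Probability that a sum of two independent ℕ-valued variables is odd. -/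
lemma odd_add_prob {Ω : Type*} [MeasurableSpace Ω] (P : Measure Ω) [IsProbabilityMeasure P]
    (X Y : Ω → ℕ) (hXm : Measurable X) (hYm : Measurable Y) (hind : IndepFun X Y P) :
    (P {ω | Odd (X ω + Y ω)}).toReal
      = (P {ω | Odd (X ω)}).toReal + (P {ω | Odd (Y ω)}).toReal
        - 2 * (P {ω | Odd (X ω)}).toReal * (P {ω | Odd (Y ω)}).toReal := by
  set O : Set ℕ := {n | Odd n} with hO
  have hOmeas : MeasurableSet O := .of_discrete
  have hsplit : {ω | Odd (X ω + Y ω)} = (X ⁻¹' O ∩ Y ⁻¹' Oᶜ) ∪ (X ⁻¹' Oᶜ ∩ Y ⁻¹' O) := by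
    ext ω
    simp only [Set.mem_setOf_eq, Set.mem_union, Set.mem_inter_iff, Set.mem_preimage,
      Set.mem_compl_iff, hO, Nat.odd_iff]
    omega
  have hdisj : Disjoint (X ⁻¹' O ∩ Y ⁻¹' Oᶜ) (X ⁻¹' Oᶜ ∩ Y ⁻¹' O) := by
    refine Set.disjoint_left.mpr fun ω h1 h2 => ?_
    exact h2.1 h1.1
  have hm1 : MeasurableSet (X ⁻¹' O ∩ Y ⁻¹' Oᶜ) := (hXm hOmeas).inter (hYm hOmeas.compl)
  have hm2 : MeasurableSet (X ⁻¹' Oᶜ ∩ Y ⁻¹' O) := (hXm hOmeas.compl).inter (hYm hOmeas)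
  have e1 : P (X ⁻¹' O ∩ Y ⁻¹' Oᶜ) = P (X ⁻¹' O) * P (Y ⁻¹' Oᶜ) :=
    hind.measure_inter_preimage_eq_mul O Oᶜ hOmeas hOmeas.compl
  have e2 : P (X ⁻¹' Oᶜ ∩ Y ⁻¹' O) = P (X ⁻¹' Oᶜ) * P (Y ⁻¹' O) :=
    hind.measure_inter_preimage_eq_mul Oᶜ O hOmeas.compl hOmeas
  have hcX : (P (X ⁻¹' Oᶜ)).toReal = 1 - (P (X ⁻¹' O)).toReal := by
    rw [Set.preimage_compl, measure_compl (hXm hOmeas) (measure_ne_top _ _), measure_univ,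
      ENNReal.toReal_sub_of_le prob_le_one ENNReal.one_ne_top, ENNReal.toReal_one]
  have hcY : (P (Y ⁻¹' Oᶜ)).toReal = 1 - (P (Y ⁻¹' O)).toReal := by
    rw [Set.preimage_compl, measure_compl (hYm hOmeas) (measure_ne_top _ _), measure_univ,
      ENNReal.toReal_sub_of_le prob_le_one ENNReal.one_ne_top, ENNReal.toReal_one]
  have hXO : {ω | Odd (X ω)} = X ⁻¹' O := rfl
  have hYO : {ω | Odd (Y ω)} = Y ⁻¹' O := rfl
  rw [hsplit, measure_union hdisj hm2, ENNReal.toReal_add (measure_ne_top _ _) (measure_ne_top _ _),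
    e1, e2, ENNReal.toReal_mul, ENNReal.toReal_mul, hXO, hYO, hcX, hcY]
  ring

lemma aux_cov {Ω : Type*} [mΩ : MeasurableSpace Ω] (P : Measure Ω) [IsProbabilityMeasure P]
    (c : ℕ → ℝ) (hc0 : ∀ k, 0 ≤ c k) (hc : Summable c)
    (A B : ℕ → Set Ω)
    (m1 m2 : ℕ → MeasurableSpace Ω)
    (hm1 : ∀ k, m1 k ≤ mΩ) (hm2 : ∀ k, m2 k ≤ mΩ)
    (hA : ∀ k, MeasurableSet[m1 k] (A k))
    (hBmeas : ∀ k, MeasurableSet (B k))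
    (hB2 : ∀ k j, j ≠ k → MeasurableSet[m2 k] (B j))
    (hindep : ∀ k, Indep (m1 k) (m2 k) P)
    (hBB : ∀ j k, j ≠ k → P (B j ∩ B k) = P (B j) * P (B k))
    (hBsum : ∑' k, P (B k) ≠ ⊤)
    (M U : Ω → ℝ)
    (hM : ∀ ω, M ω = ∑' k, c k * (A k).indicator 1 ω)
    (hU : ∀ ω, U ω = ∑' k, (B k).indicator 1 ω) :
    (∀ᵐ ω ∂P, Summable fun k => (B k).indicator (1 : Ω → ℝ) ω) ∧
    MemLp M 2 P ∧ MemLp U 2 P ∧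
    (∫ ω, (M ω - ∫ ω', M ω' ∂P) * (U ω - ∫ ω', U ω' ∂P) ∂P)
      = ∑' k, c k * ((P (A k ∩ B k)).toReal - (P (A k)).toReal * (P (B k)).toReal) := by
  classical
  have hAmeas : ∀ k, MeasurableSet (A k) := fun k => hm1 k _ (hA k)
  set bR : ℕ → Ω → ℝ := fun k => (B k).indicator 1 with hbR
  set bE : ℕ → Ω → ℝ≥0∞ := fun k => (B k).indicator 1 with hbE
  have hbRmeas : ∀ k, Measurable (bR k) := fun k => measurable_const.indicator (hBmeas k)
  have hbEmeas : ∀ k, Measurable (bE k) := fun k => measurable_const.indicator (hBmeas k)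
  have hbR0 : ∀ k ω, 0 ≤ bR k ω := fun k ω =>
    Set.indicator_nonneg (fun _ _ => zero_le_one) ω
  have hbR1 : ∀ k ω, bR k ω ≤ 1 := fun k ω =>
    Set.indicator_le' (fun _ _ => le_refl 1) (fun _ _ => zero_le_one) ω
  have hofReal : ∀ k ω, ENNReal.ofReal (bR k ω) = bE k ω := by
    intro k ω
    simp only [hbR, hbE, Set.indicator_apply]
    split <;> simp
  set g : Ω → ℝ≥0∞ := fun ω => ∑' k, bE k ω with hg
  have hgmeas : Measurable g := Measurable.ennreal_tsum hbEmeas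
  have hglint : ∫⁻ ω, g ω ∂P = ∑' k, P (B k) := by
    rw [hg]
    rw [lintegral_tsum fun k => (hbEmeas k).aemeasurable]
    exact tsum_congr fun k => lintegral_indicator_one (hBmeas k)
  have hgfin : ∀ᵐ ω ∂P, g ω < ⊤ := ae_lt_top hgmeas (by rw [hglint]; exact hBsum)
  have hUsum : ∀ᵐ ω ∂P, Summable fun k => bR k ω := by
    filter_upwards [hgfin] with ω hω
    have h := ENNReal.summable_toReal hω.ne
    refine h.congr fun k => ?_
    rw [← hofReal k ω, ENNReal.toReal_ofReal (hbR0 k ω)]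
  have hUg : ∀ ω, U ω = (g ω).toReal := by
    intro ω
    rw [hU ω, tsum_nonneg_eq_toReal _ (fun k => hbR0 k ω)]
    congr 1
    exact tsum_congr fun k => hofReal k ω
  have hUmeas : Measurable U := by
    have h : U = fun ω => (g ω).toReal := funext hUg
    rw [h]; exact hgmeas.ennreal_toReal
  have hUnonneg : ∀ ω, 0 ≤ U ω := fun ω => by rw [hUg ω]; exact ENNReal.toReal_nonneg
  -- second moment bound for g
  have hglint2 : ∫⁻ ω, g ω * g ω ∂P
      ≤ (∑' k, P (B k)) + (∑' k, P (B k)) * (∑' k, P (B k)) := by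
    have hprod : ∀ ω, g ω * g ω = ∑' (j : ℕ), ∑' (k : ℕ), bE j ω * bE k ω := by
      intro ω
      rw [show g ω * g ω = (∑' j, bE j ω) * g ω from rfl, ← ENNReal.tsum_mul_right]
      exact tsum_congr fun j => (ENNReal.tsum_mul_left).symm
    have hlin : ∫⁻ ω, g ω * g ω ∂P = ∑' (j : ℕ), ∑' (k : ℕ), P (B j ∩ B k) := by
      simp_rw [hprod]
      rw [lintegral_tsum (f := fun j ω => ∑' k, bE j ω * bE k ω) fun j =>
        (Measurable.ennreal_tsum fun k => (hbEmeas j).mul (hbEmeas k)).aemeasurable]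
      refine tsum_congr fun j => ?_
      rw [lintegral_tsum (f := fun k ω => bE j ω * bE k ω) fun k => ((hbEmeas j).mul (hbEmeas k)).aemeasurable]
      refine tsum_congr fun k => ?_
      have hpt : ∀ ω, bE j ω * bE k ω = (B j ∩ B k).indicator 1 ω := by
        intro ω
        rw [hbE]
        simp only
        rw [Set.inter_indicator_one]
        rfl
      simp_rw [hpt]
      exact lintegral_indicator_one ((hBmeas j).inter (hBmeas k))
    rw [hlin]
    calc ∑' (j : ℕ), ∑' (k : ℕ), P (B j ∩ B k)
        ≤ ∑' (j : ℕ), (P (B j) + P (B j) * ∑' k, P (B k)) := by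
          refine ENNReal.tsum_le_tsum fun j => ?_
          calc ∑' (k : ℕ), P (B j ∩ B k)
              ≤ ∑' (k : ℕ), ((if k = j then P (B j) else 0) + P (B j) * P (B k)) := by
                refine ENNReal.tsum_le_tsum fun k => ?_
                by_cases hkj : k = j
                · subst hkj
                  simp only [if_pos rfl, Set.inter_self]
                  exact le_self_add
                · rw [hBB j k (fun h => hkj h.symm)]
                  simp [hkj]
            _ = P (B j) + P (B j) * ∑' k, P (B k) := by
                rw [ENNReal.tsum_add, tsum_ite_eq, ENNReal.tsum_mul_left]
      _ = (∑' k, P (B k)) + (∑' k, P (B k)) * (∑' k, P (B k)) := by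
          rw [ENNReal.tsum_add, ENNReal.tsum_mul_right]
  have hU2 : MemLp U 2 P := by
    rw [memLp_two_iff_integrable_sq hUmeas.aestronglyMeasurable]
    refine ⟨(hUmeas.pow_const 2).aestronglyMeasurable, ?_⟩
    show ∫⁻ ω, ‖U ω ^ 2‖₊ ∂P < ⊤
    have heq : ∀ᵐ ω ∂P, ((‖U ω ^ 2‖₊ : ℝ≥0∞)) = g ω * g ω := by
      filter_upwards [hgfin] with ω hω
      rw [← enorm_eq_nnnorm, Real.enorm_eq_ofReal (by positivity), ENNReal.ofReal_pow (hUnonneg ω), hUg ω,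
        ENNReal.ofReal_toReal hω.ne, sq]
    rw [lintegral_congr_ae heq]
    exact lt_of_le_of_lt hglint2
      (ENNReal.add_lt_top.mpr ⟨hBsum.lt_top, ENNReal.mul_lt_top hBsum.lt_top hBsum.lt_top⟩)
  -- M side
  have haR_meas : ∀ k, Measurable (fun ω => c k * (A k).indicator (1 : Ω → ℝ) ω) :=
    fun k => (measurable_const.indicator (hAmeas k)).const_mul _
  have haR0 : ∀ k ω, 0 ≤ c k * (A k).indicator (1 : Ω → ℝ) ω :=
    fun k ω => mul_nonneg (hc0 k) (Set.indicator_nonneg (fun _ _ => zero_le_one) ω)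
  have haRle : ∀ k ω, c k * (A k).indicator (1 : Ω → ℝ) ω ≤ c k := by
    intro k ω
    have h1 : (A k).indicator (1 : Ω → ℝ) ω ≤ 1 :=
      Set.indicator_le' (fun _ _ => le_refl 1) (fun _ _ => zero_le_one) ω
    calc c k * (A k).indicator (1 : Ω → ℝ) ω ≤ c k * 1 :=
          mul_le_mul_of_nonneg_left h1 (hc0 k)
      _ = c k := mul_one _
  have hMsum : ∀ ω, Summable fun k => c k * (A k).indicator (1 : Ω → ℝ) ω :=
    fun ω => Summable.of_nonneg_of_le (fun k => haR0 k ω) (fun k => haRle k ω) hc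
  have hMmeas : Measurable M := by
    have h : M = fun ω => ∑' k, c k * (A k).indicator (1 : Ω → ℝ) ω := funext hM
    rw [h]
    exact measurable_tsum_nonneg _ haR_meas (fun k ω => haR0 k ω)
  have hMbd : ∀ ω, |M ω| ≤ ∑' k, c k := by
    intro ω
    rw [hM ω, abs_of_nonneg (tsum_nonneg fun k => haR0 k ω)]
    exact Summable.tsum_le_tsum (fun k => haRle k ω) (hMsum ω) hc
  have hM2 : MemLp M 2 P :=
    MemLp.of_bound hMmeas.aestronglyMeasurable _
      (Eventually.of_forall fun ω => by rw [Real.norm_eq_abs]; exact hMbd ω)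
  have hUint : Integrable U P := hU2.integrable one_le_two
  have hMint : Integrable M P := hM2.integrable one_le_two
  have hbint : ∀ k, Integrable (bR k) P :=
    fun k => (integrable_const (1 : ℝ)).indicator (hBmeas k)
  have hbR_intval : ∀ k, ∫ ω, bR k ω ∂P = (P (B k)).toReal :=
    fun k => integral_indicator_one (hBmeas k)
  -- integral of M
  have hflM : ∀ k, ∫⁻ ω, ‖c k * (A k).indicator (1 : Ω → ℝ) ω‖₊ ∂P ≤ ENNReal.ofReal (c k) := by
    intro k
    calc ∫⁻ ω, ‖c k * (A k).indicator (1 : Ω → ℝ) ω‖₊ ∂P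
        ≤ ∫⁻ _, ENNReal.ofReal (c k) ∂P := by
          refine lintegral_mono fun ω => ?_
          rw [← enorm_eq_nnnorm, Real.enorm_eq_ofReal_abs]
          exact ENNReal.ofReal_le_ofReal
            (by rw [abs_of_nonneg (haR0 k ω)]; exact haRle k ω)
      _ = ENNReal.ofReal (c k) := by simp
  have hsumflM : ∑' k, ∫⁻ ω, ‖c k * (A k).indicator (1 : Ω → ℝ) ω‖₊ ∂P ≠ ⊤ := by
    refine ne_top_of_le_ne_top (b := ENNReal.ofReal (∑' k, c k)) ENNReal.ofReal_ne_top ?_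
    calc ∑' k, ∫⁻ ω, ‖c k * (A k).indicator (1 : Ω → ℝ) ω‖₊ ∂P
        ≤ ∑' k, ENNReal.ofReal (c k) := ENNReal.tsum_le_tsum hflM
      _ = ENNReal.ofReal (∑' k, c k) := (ENNReal.ofReal_tsum_of_nonneg hc0 hc).symm
  have hIM : ∫ ω, M ω ∂P = ∑' k, c k * (P (A k)).toReal := by
    have h : ∫ ω, M ω ∂P = ∫ ω, ∑' k, c k * (A k).indicator (1 : Ω → ℝ) ω ∂P :=
      integral_congr_ae (Eventually.of_forall hM)
    rw [h, integral_tsum (fun k => (haR_meas k).aestronglyMeasurable) hsumflM]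
    refine tsum_congr fun k => ?_
    rw [integral_const_mul, integral_indicator_one (hAmeas k)]
    rfl
  -- integral of M * U
  set IU := ∫ ω, U ω ∂P with hIU
  have hKfin : ∫⁻ ω, ‖U ω‖₊ ∂P ≠ ⊤ := hUint.2.ne
  have hMU_int : Integrable (fun ω => M ω * U ω) P :=
    hUint.bdd_mul hMmeas.aestronglyMeasurable
      (Eventually.of_forall fun ω => by rw [Real.norm_eq_abs]; exact hMbd ω)
  have hswap : ∫ ω, M ω * U ω ∂P
      = ∑' k, ∫ ω, (c k * (A k).indicator (1 : Ω → ℝ) ω) * U ω ∂P := by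
    have hptw : ∀ ω, M ω * U ω = ∑' k, (c k * (A k).indicator (1 : Ω → ℝ) ω) * U ω := by
      intro ω; rw [hM ω]; exact (tsum_mul_right).symm
    have h : ∫ ω, M ω * U ω ∂P
        = ∫ ω, ∑' k, (c k * (A k).indicator (1 : Ω → ℝ) ω) * U ω ∂P :=
      integral_congr_ae (Eventually.of_forall hptw)
    rw [h]
    refine integral_tsum (fun k => ((haR_meas k).mul hUmeas).aestronglyMeasurable) ?_
    have hle : ∀ k, ∫⁻ ω, ‖(c k * (A k).indicator (1 : Ω → ℝ) ω) * U ω‖₊ ∂P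
        ≤ ENNReal.ofReal (c k) * ∫⁻ ω, ‖U ω‖₊ ∂P := by
      intro k
      have hpt : ∀ ω, (‖(c k * (A k).indicator (1 : Ω → ℝ) ω) * U ω‖₊ : ℝ≥0∞)
          ≤ ENNReal.ofReal (c k) * ‖U ω‖₊ := by
        intro ω
        rw [nnnorm_mul, ENNReal.coe_mul]
        refine mul_le_mul_left ?_ _
        rw [← enorm_eq_nnnorm, Real.enorm_eq_ofReal_abs]
        exact ENNReal.ofReal_le_ofReal (by rw [abs_of_nonneg (haR0 k ω)]; exact haRle k ω)
      calc ∫⁻ ω, ‖(c k * (A k).indicator (1 : Ω → ℝ) ω) * U ω‖₊ ∂P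
          ≤ ∫⁻ ω, ENNReal.ofReal (c k) * ‖U ω‖₊ ∂P := lintegral_mono hpt
        _ = ENNReal.ofReal (c k) * ∫⁻ ω, ‖U ω‖₊ ∂P :=
            lintegral_const_mul _ hUmeas.enorm
    refine ne_top_of_le_ne_top ?_ (ENNReal.tsum_le_tsum hle)
    rw [ENNReal.tsum_mul_right, ← ENNReal.ofReal_tsum_of_nonneg hc0 hc]
    exact ENNReal.mul_ne_top ENNReal.ofReal_ne_top hKfin
  have hterm : ∀ k, ∫ ω, (c k * (A k).indicator (1 : Ω → ℝ) ω) * U ω ∂P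
      = c k * ((P (A k ∩ B k)).toReal + (P (A k)).toReal * (IU - (P (B k)).toReal)) := by
    intro k
    set aI : Ω → ℝ := (A k).indicator 1 with haI
    set W : Ω → ℝ := fun ω => ∑' j, if j = k then 0 else bR j ω with hWdef
    have hWm2 : Measurable[m2 k] W := by
      refine measurable_tsum_nonneg _ ?_ ?_
      · intro j
        by_cases hjk : j = k
        · simpa [hjk] using (@measurable_const ℝ Ω _ (m2 k) 0)
        · simp only [if_neg hjk]
          exact (@measurable_const ℝ Ω _ (m2 k) 1).indicator (hB2 k j hjk)
      · intro j ω
        by_cases hjk : j = k <;> simp [hjk, hbR0]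
    have hWmeas : Measurable W := hWm2.mono (hm2 k) le_rfl
    have hUae : ∀ᵐ ω ∂P, U ω = bR k ω + W ω := by
      filter_upwards [hUsum] with ω hω
      rw [hU ω, hWdef]
      exact Summable.tsum_eq_add_tsum_ite hω k
    have hWint : Integrable W P := by
      refine (hUint.sub (hbint k)).congr ?_
      filter_upwards [hUae] with ω hω
      simp only [Pi.sub_apply]
      rw [hω]; ring
    have haIint : Integrable aI P := (integrable_const (1 : ℝ)).indicator (hAmeas k)
    have haIm1 : Measurable[m1 k] aI := (@measurable_const ℝ Ω _ (m1 k) 1).indicator (hA k)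
    have haImeas : Measurable aI := haIm1.mono (hm1 k) le_rfl
    have haIbd : ∀ ω, ‖aI ω‖ ≤ 1 := by
      intro ω
      have h0 : (0 : ℝ) ≤ aI ω := Set.indicator_nonneg (fun _ _ => zero_le_one) ω
      have h1 : aI ω ≤ 1 := Set.indicator_le' (fun _ _ => le_refl 1) (fun _ _ => zero_le_one) ω
      rw [Real.norm_eq_abs, abs_of_nonneg h0]
      exact h1
    have hindepFun : IndepFun aI W P := by
      rw [IndepFun_iff_Indep]
      exact indep_mono (hindep k) (measurable_iff_comap_le.mp haIm1)
        (measurable_iff_comap_le.mp hWm2)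
    have hsplit : ∫ ω, aI ω * U ω ∂P = ∫ ω, aI ω * bR k ω ∂P + ∫ ω, aI ω * W ω ∂P := by
      have h1 : Integrable (fun ω => aI ω * bR k ω) P :=
        (hbint k).bdd_mul haImeas.aestronglyMeasurable (Eventually.of_forall haIbd)
      have h2 : Integrable (fun ω => aI ω * W ω) P :=
        hWint.bdd_mul haImeas.aestronglyMeasurable (Eventually.of_forall haIbd)
      rw [← integral_add h1 h2]
      refine integral_congr_ae ?_
      filter_upwards [hUae] with ω hω
      rw [hω]; ring
    have hprod1 : ∫ ω, aI ω * bR k ω ∂P = (P (A k ∩ B k)).toReal := by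
      have hpt : ∀ ω, aI ω * bR k ω = (A k ∩ B k).indicator (1 : Ω → ℝ) ω := by
        intro ω
        rw [haI, Set.inter_indicator_one]
        rfl
      simp_rw [hpt]
      exact integral_indicator_one ((hAmeas k).inter (hBmeas k))
    have hprod2 : ∫ ω, aI ω * W ω ∂P = (P (A k)).toReal * (IU - (P (B k)).toReal) := by
      have hmul := hindepFun.integral_mul_eq_mul_integral haIint.aestronglyMeasurable hWint.aestronglyMeasurable
      have hmul' : ∫ ω, aI ω * W ω ∂P = (∫ ω, aI ω ∂P) * ∫ ω, W ω ∂P := hmul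
      rw [hmul']
      have hIa : ∫ ω, aI ω ∂P = (P (A k)).toReal := integral_indicator_one (hAmeas k)
      have hIW : ∫ ω, W ω ∂P = IU - (P (B k)).toReal := by
        have h : ∫ ω, W ω ∂P = ∫ ω, (U ω - bR k ω) ∂P := by
          refine integral_congr_ae ?_
          filter_upwards [hUae] with ω hω
          rw [hω]; ring
        rw [h, integral_sub hUint (hbint k), hbR_intval k, hIU]
      rw [hIa, hIW]
    calc ∫ ω, (c k * aI ω) * U ω ∂P = c k * ∫ ω, aI ω * U ω ∂P := by
          simp_rw [mul_assoc]
          exact integral_const_mul _ _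
      _ = c k * ((P (A k ∩ B k)).toReal + (P (A k)).toReal * (IU - (P (B k)).toReal)) := by
          rw [hsplit, hprod1, hprod2]
  have hMU : ∫ ω, M ω * U ω ∂P
      = ∑' k, c k * ((P (A k ∩ B k)).toReal + (P (A k)).toReal * (IU - (P (B k)).toReal)) := by
    rw [hswap]; exact tsum_congr hterm
  have hcov_exp : ∫ ω, (M ω - ∫ ω', M ω' ∂P) * (U ω - IU) ∂P
      = ∫ ω, M ω * U ω ∂P - (∫ ω', M ω' ∂P) * IU := by
    set IM := ∫ ω', M ω' ∂P with hIMdef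
    have hpt : ∀ ω, (M ω - IM) * (U ω - IU)
        = M ω * U ω - IM * U ω - IU * M ω + IM * IU := by intro ω; ring
    have h : ∫ ω, (M ω - IM) * (U ω - IU) ∂P
        = ∫ ω, (M ω * U ω - IM * U ω - IU * M ω + IM * IU) ∂P :=
      integral_congr_ae (Eventually.of_forall fun ω => hpt ω)
    have i2 : Integrable (fun ω => M ω * U ω - IM * U ω) P := hMU_int.sub (hUint.const_mul IM)
    have i1 : Integrable (fun ω => M ω * U ω - IM * U ω - IU * M ω) P :=
      i2.sub (hMint.const_mul IU)
    rw [h, integral_add i1 (integrable_const _), integral_sub i2 (hMint.const_mul IU),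
      integral_sub hMU_int (hUint.const_mul IM),
      integral_const_mul, integral_const_mul, integral_const]
    simp only [measure_univ, probReal_univ, ENNReal.toReal_one, smul_eq_mul, one_mul, mul_one]
    rw [← hIU]
    ring
  have htoReal01 : ∀ s : Set Ω, (P s).toReal ≤ 1 := by
    intro s
    rw [show (1 : ℝ) = (1 : ℝ≥0∞).toReal from ENNReal.toReal_one.symm]
    exact ENNReal.toReal_mono ENNReal.one_ne_top prob_le_one
  have hs1 : Summable (fun k =>
      c k * ((P (A k ∩ B k)).toReal - (P (A k)).toReal * (P (B k)).toReal)) := by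
    refine Summable.of_norm_bounded hc fun k => ?_
    rw [Real.norm_eq_abs, abs_mul, abs_of_nonneg (hc0 k)]
    have h1 : |(P (A k ∩ B k)).toReal - (P (A k)).toReal * (P (B k)).toReal| ≤ 1 := by
      rw [abs_le]
      constructor
      · nlinarith [htoReal01 (A k), htoReal01 (B k), ENNReal.toReal_nonneg (a := P (A k ∩ B k)),
          ENNReal.toReal_nonneg (a := P (A k)), ENNReal.toReal_nonneg (a := P (B k))]
      · nlinarith [htoReal01 (A k ∩ B k), ENNReal.toReal_nonneg (a := P (A k)),
          ENNReal.toReal_nonneg (a := P (B k))]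
    nlinarith [hc0 k]
  have hs2 : Summable (fun k => c k * (P (A k)).toReal) := by
    refine Summable.of_nonneg_of_le (fun k => mul_nonneg (hc0 k) ENNReal.toReal_nonneg)
      (fun k => ?_) hc
    nlinarith [htoReal01 (A k), hc0 k, ENNReal.toReal_nonneg (a := P (A k))]
  refine ⟨hUsum, hM2, hU2, ?_⟩
  rw [hcov_exp, hMU, hIM]
  have hsplitsum : ∀ k, c k * ((P (A k ∩ B k)).toReal
        + (P (A k)).toReal * (IU - (P (B k)).toReal))
      = c k * ((P (A k ∩ B k)).toReal - (P (A k)).toReal * (P (B k)).toReal)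
        + (c k * (P (A k)).toReal) * IU := by intro k; ring
  rw [tsum_congr hsplitsum, Summable.tsum_add hs1 (hs2.mul_right IU), tsum_mul_right]
  ring

open Filter Topology Real MeasureTheory ProbabilityTheory
open scoped ENNReal NNReal

/-- Cross-covariances of the Poissonized scaled missing mass and odd-occupancy processes
at times `τ ≤ t`: `Cov(M(τ), U(t)) = (1/2) ∑_k τ p_k (e^{−p_k(2t+τ)} − e^{−p_k(2t−τ)})`
and `Cov(M(t), U(τ)) = (1/2) ∑_k t p_k (e^{−p_k(2τ+t)} − e^{−p_k t})`. -/
theorem covariance_missing_mass_odd_occupancy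
    {Ω : Type*} [MeasurableSpace Ω] (P : Measure Ω) [IsProbabilityMeasure P]
    (p : ℕ → ℝ) (hp_pos : ∀ k, 0 < p k) (hp_sum : ∑' k, p k = 1)
    (τ t : ℝ) (hτ : 0 < τ) (hτt : τ ≤ t)
    (X Y : ℕ → Ω → ℕ) (hX_meas : ∀ k, Measurable (X k)) (hY_meas : ∀ k, Measurable (Y k))
    (h_indep : iIndepFun (Sum.elim X Y) P)
    (hX : ∀ k, ∀ j : ℕ, (P {ω | X k ω = j}).toReal
      = Real.exp (-(p k * τ)) * (p k * τ) ^ j / j.factorial)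
    (hY : ∀ k, ∀ j : ℕ, (P {ω | Y k ω = j}).toReal
      = Real.exp (-(p k * (t - τ))) * (p k * (t - τ)) ^ j / j.factorial)
    (Mτ Mt Uτ Ut : Ω → ℝ)
    (hMτ : ∀ ω, Mτ ω = ∑' k, τ * p k * (if X k ω = 0 then (1 : ℝ) else 0))
    (hMt : ∀ ω, Mt ω = ∑' k, t * p k * (if X k ω + Y k ω = 0 then (1 : ℝ) else 0))
    (hUτ : ∀ ω, Uτ ω = ∑' k, if Odd (X k ω) then (1 : ℝ) else 0)
    (hUt : ∀ ω, Ut ω = ∑' k, if Odd (X k ω + Y k ω) then (1 : ℝ) else 0) :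
    (∀ᵐ ω ∂P, Summable fun k => |τ * p k * (if X k ω = 0 then (1 : ℝ) else 0)|) ∧
    (∀ᵐ ω ∂P, Summable fun k => |t * p k * (if X k ω + Y k ω = 0 then (1 : ℝ) else 0)|) ∧
    (∀ᵐ ω ∂P, Summable fun k => if Odd (X k ω) then (1 : ℝ) else 0) ∧
    (∀ᵐ ω ∂P, Summable fun k => if Odd (X k ω + Y k ω) then (1 : ℝ) else 0) ∧
    MemLp Mτ 2 P ∧ MemLp Mt 2 P ∧ MemLp Uτ 2 P ∧ MemLp Ut 2 P ∧
    (∫ ω, (Mτ ω - ∫ ω', Mτ ω' ∂P) * (Ut ω - ∫ ω', Ut ω' ∂P) ∂P)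
      = (1 / 2) * ∑' k, τ * p k * (Real.exp (-(p k * (2 * t + τ)))
          - Real.exp (-(p k * (2 * t - τ)))) ∧
    (∫ ω, (Mt ω - ∫ ω', Mt ω' ∂P) * (Uτ ω - ∫ ω', Uτ ω' ∂P) ∂P)
      = (1 / 2) * ∑' k, t * p k * (Real.exp (-(p k * (2 * τ + t)))
          - Real.exp (-(p k * t))) := by
  classical
  have hp0 : ∀ k, 0 ≤ p k := fun k => (hp_pos k).le
  have hp_summ : Summable p := by
    by_contra h
    rw [tsum_eq_zero_of_not_summable h] at hp_sum
    norm_num at hp_sum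
  have ht0 : 0 < t := lt_of_lt_of_le hτ hτt
  have htτ0 : 0 ≤ t - τ := by linarith
  set F : ℕ ⊕ ℕ → Ω → ℕ := Sum.elim X Y with hF
  have hFmeas : ∀ i, Measurable (F i) := by rintro (k | k); exacts [hX_meas k, hY_meas k]
  set S : ℕ → Set (ℕ ⊕ ℕ) := fun k => {Sum.inl k, Sum.inr k} with hS
  set m1 : ℕ → MeasurableSpace Ω :=
    fun k => ⨆ i ∈ S k, MeasurableSpace.comap (F i) inferInstance with hm1def
  set m2 : ℕ → MeasurableSpace Ω :=
    fun k => ⨆ i ∈ (S k)ᶜ, MeasurableSpace.comap (F i) inferInstance with hm2def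
  have hm1 : ∀ k, m1 k ≤ ‹MeasurableSpace Ω› :=
    fun k => iSup₂_le fun i _ => (hFmeas i).comap_le
  have hm2 : ∀ k, m2 k ≤ ‹MeasurableSpace Ω› :=
    fun k => iSup₂_le fun i _ => (hFmeas i).comap_le
  have hindepm : ∀ k, Indep (m1 k) (m2 k) P := fun k =>
    indep_iSup_of_disjoint (fun i => (hFmeas i).comap_le) h_indep.iIndep disjoint_compl_right
  have hcomap_le1 : ∀ k i, i ∈ S k → MeasurableSpace.comap (F i) inferInstance ≤ m1 k := by
    intro k i hi
    exact le_iSup₂ (f := fun i (_ : i ∈ S k) => MeasurableSpace.comap (F i) inferInstance) i hi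
  have hcomap_le2 : ∀ k i, i ∈ (S k)ᶜ → MeasurableSpace.comap (F i) inferInstance ≤ m2 k := by
    intro k i hi
    exact le_iSup₂ (f := fun i (_ : i ∈ (S k)ᶜ) => MeasurableSpace.comap (F i) inferInstance) i hi
  have hX1 : ∀ k, Measurable[m1 k] (X k) := fun k =>
    Measurable.of_comap_le (hcomap_le1 k (Sum.inl k) (by simp [hS]))
  have hY1 : ∀ k, Measurable[m1 k] (Y k) := fun k =>
    Measurable.of_comap_le (hcomap_le1 k (Sum.inr k) (by simp [hS]))
  have hX2 : ∀ k j, j ≠ k → Measurable[m2 k] (X j) := fun k j hjk =>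
    Measurable.of_comap_le (hcomap_le2 k (Sum.inl j) (by simp [hS, hjk]))
  have hY2 : ∀ k j, j ≠ k → Measurable[m2 k] (Y j) := fun k j hjk =>
    Measurable.of_comap_le (hcomap_le2 k (Sum.inr j) (by simp [hS, hjk]))
  -- probability computations
  have hXP0 : ∀ k, (P {ω | X k ω = 0}).toReal = Real.exp (-(p k * τ)) := by
    intro k; simpa using hX k 0
  have hYP0 : ∀ k, (P {ω | Y k ω = 0}).toReal = Real.exp (-(p k * (t - τ))) := by
    intro k; simpa using hY k 0
  have hXodd : ∀ k, (P {ω | Odd (X k ω)}).toReal = (1 - Real.exp (-(2 * (p k * τ)))) / 2 :=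
    fun k => poisson_odd P (X k) (hX_meas k) _ (hX k)
  have hYodd : ∀ k, (P {ω | Odd (Y k ω)}).toReal
      = (1 - Real.exp (-(2 * (p k * (t - τ))))) / 2 :=
    fun k => poisson_odd P (Y k) (hY_meas k) _ (hY k)
  have hindXY : ∀ k, IndepFun (X k) (Y k) P := fun k =>
    h_indep.indepFun (show (Sum.inl k : ℕ ⊕ ℕ) ≠ Sum.inr k by simp)
  have hXYodd : ∀ k, (P {ω | Odd (X k ω + Y k ω)}).toReal
      = (1 - Real.exp (-(2 * (p k * t)))) / 2 := by
    intro k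
    rw [odd_add_prob P (X k) (Y k) (hX_meas k) (hY_meas k) (hindXY k), hXodd k, hYodd k]
    have hexp : Real.exp (-(2 * (p k * τ))) * Real.exp (-(2 * (p k * (t - τ))))
        = Real.exp (-(2 * (p k * t))) := by
      rw [← Real.exp_add]; congr 1; ring
    linear_combination (-(1 : ℝ) / 2) * hexp
  have hA1B1 : ∀ k, (P ({ω | X k ω = 0} ∩ {ω | Odd (X k ω + Y k ω)})).toReal
      = Real.exp (-(p k * τ)) * ((1 - Real.exp (-(2 * (p k * (t - τ))))) / 2) := by
    intro k
    have hseteq : {ω | X k ω = 0} ∩ {ω | Odd (X k ω + Y k ω)}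
        = X k ⁻¹' {0} ∩ Y k ⁻¹' {n | Odd n} := by
      ext ω
      simp only [Set.mem_inter_iff, Set.mem_setOf_eq, Set.mem_preimage, Set.mem_singleton_iff]
      constructor
      · rintro ⟨h0, hodd⟩; exact ⟨h0, by rwa [h0, zero_add] at hodd⟩
      · rintro ⟨h0, hodd⟩; exact ⟨h0, by rwa [h0, zero_add]⟩
    rw [hseteq, (hindXY k).measure_inter_preimage_eq_mul _ _ .of_discrete .of_discrete,
      ENNReal.toReal_mul,
      show (X k ⁻¹' {0} : Set Ω) = {ω | X k ω = 0} by ext ω; simp,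
      show (Y k ⁻¹' {n | Odd n} : Set Ω) = {ω | Odd (Y k ω)} from rfl, hXP0 k, hYodd k]
  have hA2P : ∀ k, (P {ω | X k ω + Y k ω = 0}).toReal = Real.exp (-(p k * t)) := by
    intro k
    have hseteq : {ω | X k ω + Y k ω = 0} = X k ⁻¹' {0} ∩ Y k ⁻¹' {0} := by
      ext ω
      simp only [Set.mem_setOf_eq, Set.mem_inter_iff, Set.mem_preimage, Set.mem_singleton_iff]
      omega
    rw [hseteq, (hindXY k).measure_inter_preimage_eq_mul _ _ .of_discrete .of_discrete,
      ENNReal.toReal_mul,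
      show (X k ⁻¹' {0} : Set Ω) = {ω | X k ω = 0} by ext ω; simp,
      show (Y k ⁻¹' {0} : Set Ω) = {ω | Y k ω = 0} by ext ω; simp,
      hXP0 k, hYP0 k, ← Real.exp_add]
    congr 1; ring
  have hA2B2empty : ∀ k, ({ω | X k ω + Y k ω = 0} ∩ {ω | Odd (X k ω)}) = (∅ : Set Ω) := by
    intro k
    ext ω
    simp only [Set.mem_inter_iff, Set.mem_setOf_eq, Set.mem_empty_iff_false, iff_false, not_and,
      Nat.odd_iff]
    omega
  -- summability of measure series
  have hbound : ∀ x : ℝ, 0 ≤ x → (1 - Real.exp (-(2 * x))) / 2 ≤ x := by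
    intro x hx
    nlinarith [Real.add_one_le_exp (-(2 * x))]
  have hBsum1 : ∑' k, P {ω | Odd (X k ω + Y k ω)} ≠ ⊤ := by
    refine ne_top_of_le_ne_top (b := ENNReal.ofReal (∑' k, p k * t)) ENNReal.ofReal_ne_top ?_
    calc ∑' k, P {ω | Odd (X k ω + Y k ω)} ≤ ∑' k, ENNReal.ofReal (p k * t) := by
          refine ENNReal.tsum_le_tsum fun k => ?_
          rw [← ENNReal.ofReal_toReal (measure_ne_top P _), hXYodd k]
          exact ENNReal.ofReal_le_ofReal (hbound _ (mul_nonneg (hp0 k) ht0.le))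
      _ = ENNReal.ofReal (∑' k, p k * t) :=
          (ENNReal.ofReal_tsum_of_nonneg (fun k => mul_nonneg (hp0 k) ht0.le)
            (hp_summ.mul_right t)).symm
  have hBsum2 : ∑' k, P {ω | Odd (X k ω)} ≠ ⊤ := by
    refine ne_top_of_le_ne_top (b := ENNReal.ofReal (∑' k, p k * τ)) ENNReal.ofReal_ne_top ?_
    calc ∑' k, P {ω | Odd (X k ω)} ≤ ∑' k, ENNReal.ofReal (p k * τ) := by
          refine ENNReal.tsum_le_tsum fun k => ?_
          rw [← ENNReal.ofReal_toReal (measure_ne_top P _), hXodd k]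
          exact ENNReal.ofReal_le_ofReal (hbound _ (mul_nonneg (hp0 k) hτ.le))
      _ = ENNReal.ofReal (∑' k, p k * τ) :=
          (ENNReal.ofReal_tsum_of_nonneg (fun k => mul_nonneg (hp0 k) hτ.le)
            (hp_summ.mul_right τ)).symm
  -- measurability of the sets with respect to the sub-σ-algebras
  have hA1m1 : ∀ k, MeasurableSet[m1 k] {ω | X k ω = 0} := fun k =>
    (hX1 k) (MeasurableSet.of_discrete (s := {0}))
  have hadd1 : ∀ k, Measurable[m1 k] (fun ω => X k ω + Y k ω) := fun k =>
    (hX1 k).add (hY1 k)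
  have hadd2 : ∀ k j, j ≠ k → Measurable[m2 k] (fun ω => X j ω + Y j ω) := fun k j hjk =>
    (hX2 k j hjk).add (hY2 k j hjk)
  have hA2m1 : ∀ k, MeasurableSet[m1 k] {ω | X k ω + Y k ω = 0} := fun k =>
    (hadd1 k) (MeasurableSet.of_discrete (s := {0}))
  have hB1meas : ∀ k, MeasurableSet {ω | Odd (X k ω + Y k ω)} := fun k =>
    ((hX_meas k).add (hY_meas k)) (MeasurableSet.of_discrete (s := {n | Odd n}))
  have hB2meas : ∀ k, MeasurableSet {ω | Odd (X k ω)} := fun k =>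
    (hX_meas k) (MeasurableSet.of_discrete (s := {n | Odd n}))
  have hB1m2 : ∀ k j, j ≠ k → MeasurableSet[m2 k] {ω | Odd (X j ω + Y j ω)} := fun k j hjk =>
    (hadd2 k j hjk) (MeasurableSet.of_discrete (s := {n | Odd n}))
  have hB1m1 : ∀ k, MeasurableSet[m1 k] {ω | Odd (X k ω + Y k ω)} := fun k =>
    (hadd1 k) (MeasurableSet.of_discrete (s := {n | Odd n}))
  have hB2m2 : ∀ k j, j ≠ k → MeasurableSet[m2 k] {ω | Odd (X j ω)} := fun k j hjk =>
    (hX2 k j hjk) (MeasurableSet.of_discrete (s := {n | Odd n}))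
  have hB2m1 : ∀ k, MeasurableSet[m1 k] {ω | Odd (X k ω)} := fun k =>
    (hX1 k) (MeasurableSet.of_discrete (s := {n | Odd n}))
  -- pairwise independence of the B sets
  have hBB1 : ∀ j k : ℕ, j ≠ k →
      P ({ω | Odd (X j ω + Y j ω)} ∩ {ω | Odd (X k ω + Y k ω)})
        = P {ω | Odd (X j ω + Y j ω)} * P {ω | Odd (X k ω + Y k ω)} := by
    intro j k hjk
    exact ((hindepm j).indepSet_of_measurableSet (hB1m1 j)
      (hB1m2 j k (Ne.symm hjk))).measure_inter_eq_mul
  have hBB2 : ∀ j k : ℕ, j ≠ k →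
      P ({ω | Odd (X j ω)} ∩ {ω | Odd (X k ω)})
        = P {ω | Odd (X j ω)} * P {ω | Odd (X k ω)} := by
    intro j k hjk
    exact ((hindepm j).indepSet_of_measurableSet (hB2m1 j)
      (hB2m2 j k (Ne.symm hjk))).measure_inter_eq_mul
  -- convert ite to indicator
  have hind1 : ∀ (s : Set Ω) (ω : Ω) [Decidable (ω ∈ s)],
      s.indicator (1 : Ω → ℝ) ω = if ω ∈ s then 1 else 0 := by
    intro s ω _; rw [Set.indicator_apply]; congr
  have hMτ' : ∀ ω, Mτ ω = ∑' k, (τ * p k) * ({ω' | X k ω' = 0}).indicator 1 ω := by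
    intro ω
    rw [hMτ ω]
    refine tsum_congr fun k => ?_
    congr 1
    simp [Set.indicator_apply]
  have hMt' : ∀ ω, Mt ω = ∑' k, (t * p k) * ({ω' | X k ω' + Y k ω' = 0}).indicator 1 ω := by
    intro ω
    rw [hMt ω]
    refine tsum_congr fun k => ?_
    congr 1
    simp [Set.indicator_apply]
  have hUt' : ∀ ω, Ut ω = ∑' k, ({ω' | Odd (X k ω' + Y k ω')}).indicator 1 ω := by
    intro ω
    rw [hUt ω]
    refine tsum_congr fun k => ?_
    simp [Set.indicator_apply]
  have hUτ' : ∀ ω, Uτ ω = ∑' k, ({ω' | Odd (X k ω')}).indicator 1 ω := by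
    intro ω
    rw [hUτ ω]
    refine tsum_congr fun k => ?_
    simp [Set.indicator_apply]
  -- apply the core lemma twice
  obtain ⟨hsumUt, hMτ2, hUt2, hcov1⟩ := aux_cov P (fun k => τ * p k)
    (fun k => mul_nonneg hτ.le (hp0 k)) (hp_summ.mul_left τ)
    (fun k => {ω | X k ω = 0}) (fun k => {ω | Odd (X k ω + Y k ω)})
    m1 m2 hm1 hm2 hA1m1 hB1meas hB1m2 hindepm hBB1 hBsum1 Mτ Ut hMτ' hUt'
  obtain ⟨hsumUτ, hMt2, hUτ2, hcov2⟩ := aux_cov P (fun k => t * p k)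
    (fun k => mul_nonneg ht0.le (hp0 k)) (hp_summ.mul_left t)
    (fun k => {ω | X k ω + Y k ω = 0}) (fun k => {ω | Odd (X k ω)})
    m1 m2 hm1 hm2 hA2m1 hB2meas hB2m2 hindepm hBB2 hBsum2 Mt Uτ hMt' hUτ'
  refine ⟨?_, ?_, ?_, ?_, hMτ2, hMt2, hUτ2, hUt2, ?_, ?_⟩
  · refine Eventually.of_forall fun ω => ?_
    refine Summable.of_nonneg_of_le (fun k => abs_nonneg _) (fun k => ?_) (hp_summ.mul_left τ)
    rw [abs_mul, abs_of_nonneg (mul_nonneg hτ.le (hp0 k))]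
    have h1 : |if X k ω = 0 then (1 : ℝ) else 0| ≤ 1 := by split <;> simp
    calc τ * p k * |if X k ω = 0 then (1 : ℝ) else 0| ≤ τ * p k * 1 :=
          mul_le_mul_of_nonneg_left h1 (mul_nonneg hτ.le (hp0 k))
      _ = τ * p k := mul_one _
  · refine Eventually.of_forall fun ω => ?_
    refine Summable.of_nonneg_of_le (fun k => abs_nonneg _) (fun k => ?_) (hp_summ.mul_left t)
    rw [abs_mul, abs_of_nonneg (mul_nonneg ht0.le (hp0 k))]
    have h1 : |if X k ω + Y k ω = 0 then (1 : ℝ) else 0| ≤ 1 := by split <;> simp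
    calc t * p k * |if X k ω + Y k ω = 0 then (1 : ℝ) else 0| ≤ t * p k * 1 :=
          mul_le_mul_of_nonneg_left h1 (mul_nonneg ht0.le (hp0 k))
      _ = t * p k := mul_one _
  · filter_upwards [hsumUτ] with ω hω
    refine hω.congr fun k => ?_
    simp [Set.indicator_apply]
  · filter_upwards [hsumUt] with ω hω
    refine hω.congr fun k => ?_
    simp [Set.indicator_apply]
  · rw [hcov1, ← tsum_mul_left]
    refine tsum_congr fun k => ?_
    rw [hA1B1 k, hXP0 k, hXYodd k]
    have e1 : Real.exp (-(p k * τ)) * Real.exp (-(2 * (p k * t)))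
        = Real.exp (-(p k * (2 * t + τ))) := by rw [← Real.exp_add]; congr 1; ring
    have e2 : Real.exp (-(p k * τ)) * Real.exp (-(2 * (p k * (t - τ))))
        = Real.exp (-(p k * (2 * t - τ))) := by rw [← Real.exp_add]; congr 1; ring
    linear_combination (τ * p k / 2) * e1 - (τ * p k / 2) * e2
  · rw [hcov2, ← tsum_mul_left]
    refine tsum_congr fun k => ?_
    rw [hA2B2empty k, hA2P k, hXodd k]
    have e3 : Real.exp (-(p k * t)) * Real.exp (-(2 * (p k * τ)))
        = Real.exp (-(p k * (2 * τ + t))) := by rw [← Real.exp_add]; congr 1; ring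
    simp only [measure_empty, ENNReal.toReal_zero]
    linear_combination (t * p k / 2) * e3
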